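/- arXiv:1604.04369 — 7 statements merged into one kernel-verified Lean document; each statement's English description precedes it below -/
import Mathlib

section
/- The Ricci tensor ρ of the oscillator Lie algebra with bi-invariant Lorentzian metric, computed in the basis (P, X₁, Y₁, Q), has ρ(Q,Q) = 1/2 and all other components zero. -/
noncomputable section

/-- Bracket of the oscillator Lie algebra on ℝ⁴, coordinates w.r.t. basis (P, X₁, Y₁, Q):
[X₁,Y₁]=P, [Q,X₁]=Y₁, [Q,Y₁]=-X₁. -/
def obr (x y : Fin 4 → ℝ) : Fin 4 → ℝ :=
  ![x 1 * y 2 - x 2 * y 1, x 2 * y 3 - x 3 * y 2, x 3 * y 1 - x 1 * y 3, 0]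

/-- The bi-invariant Lorentzian form: g(P,Q)=1, g(X₁,X₁)=g(Y₁,Y₁)=1, others zero. -/
def og (x y : Fin 4 → ℝ) : ℝ := x 0 * y 3 + x 3 * y 0 + x 1 * y 1 + x 2 * y 2

/-- standard basis vectors -/
def stdv (i : Fin 4) : Fin 4 → ℝ := fun j => if j = i then 1 else 0

def oP : Fin 4 → ℝ := stdv 0
def oX : Fin 4 → ℝ := stdv 1
def oY : Fin 4 → ℝ := stdv 2
def oQ : Fin 4 → ℝ := stdv 3

/-- Levi-Civita connection of a bi-invariant metric: ∇ₓ y = (1/2)[x,y]. -/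
def nab (x y : Fin 4 → ℝ) : Fin 4 → ℝ := (1/2 : ℝ) • obr x y

/-- Curvature tensor R(x,y)z = ∇ₓ∇_y z − ∇_y∇ₓ z − ∇_{[x,y]} z. -/
def Rcur (x y z : Fin 4 → ℝ) : Fin 4 → ℝ :=
  nab x (nab y z) - nab y (nab x z) - nab (obr x y) z

/-- Ricci tensor ρ(x,y) = tr (z ↦ R(z,x)y). -/
def ric (x y : Fin 4 → ℝ) : ℝ := ∑ i, Rcur (stdv i) x y i

set_option maxHeartbeats 2000000 in
theorem oscillator_ricci :
    ric oQ oQ = 1/2 ∧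
    ∀ i j : Fin 4, (i, j) ≠ ((3 : Fin 4), (3 : Fin 4)) → ric (stdv i) (stdv j) = 0 := by
  have key : ∀ i j : Fin 4, ric (stdv i) (stdv j) = if i = 3 ∧ j = 3 then 1/2 else 0 := by
    intro i j
    fin_cases i <;> fin_cases j <;>
      · simp (config := { decide := true }) [ric, Rcur, nab, obr, stdv, Fin.sum_univ_four]
        try norm_num
  refine ⟨?_, fun i j h => ?_⟩
  · simpa [oQ] using key 3 3
  · rw [key i j, if_neg]
    rintro ⟨rfl, rfl⟩
    exact h rfl
end
end

section
/- There is no left-invariant Ricci soliton structure on the oscillator group with its bi-invariant Lorentzian metric: there exist no real number ς and element X of the oscillator Lie algebra such that (L_X g)(y,z) = ς g(y,z) − ρ(y,z) for all y,z ∈ 𝔤, where (L_X g)(y,z) = g(∇_y X, z) + g(y, ∇_z X). -/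
noncomputable section

theorem oscillator_no_invariant_ricci_soliton :
    ¬ ∃ (ς : ℝ) (X : Fin 4 → ℝ),
      ∀ y z : Fin 4 → ℝ, og (nab y X) z + og y (nab z X) = ς * og y z - ric y z := by
  rintro ⟨ς, X, h⟩
  have h0 := h oQ oQ
  simp [oQ, stdv, og, nab, obr, ric, Rcur, Fin.sum_univ_four, Matrix.cons_val_zero,
    Matrix.cons_val_one, Matrix.head_cons] at h0
  norm_num [Matrix.cons_val_zero, Matrix.cons_val_one, Matrix.head_cons] at h0
end
end

section
/- The Weyl conformal curvature tensor of the oscillator Lie algebra with bi-invariant Lorentzian metric vanishes identically (the metric is conformally flat): C(x,y)z = R(x,y)z − (1/2)(Rc(x)∧y + x∧Rc(y))z + (τ/6)(x∧y)z = 0 for all x,y,z ∈ 𝔤, where n = 4. -/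
set_option maxHeartbeats 2000000


noncomputable section

/-- (x ∧ y) z = g(y,z) x − g(x,z) y. -/
def owedge (x y z : Fin 4 → ℝ) : Fin 4 → ℝ := og y z • x - og x z • y

/-- Ricci operator, g(Rc x, y) = ρ(x, y). -/
noncomputable def RcOp (x : Fin 4 → ℝ) : Fin 4 → ℝ := ((1/2 : ℝ) * x 3) • oP

/-- scalar curvature τ = Σ g^{ij} ρ_{ij}; for this metric the matrix of g is its own inverse. -/
noncomputable def otau : ℝ := ∑ i, ∑ j, og (stdv i) (stdv j) * ric (stdv i) (stdv j)

theorem oscillator_conformally_flat :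
    (∀ x y : Fin 4 → ℝ, og (RcOp x) y = ric x y) ∧
    ∀ x y z : Fin 4 → ℝ,
      Rcur x y z - (1/2 : ℝ) • (owedge (RcOp x) y z + owedge x (RcOp y) z)
        + (otau / 6) • owedge x y z = 0 := by
  have hst : ∀ i : Fin 4, stdv i = ![if i = 0 then 1 else 0, if i = 1 then 1 else 0,
      if i = 2 then 1 else 0, if i = 3 then 1 else 0] := by
    intro i; funext j; fin_cases j <;> simp [stdv, eq_comm]
  have h0 : (⟨0, by norm_num⟩ : Fin 4) = 0 := rfl
  have h1 : (⟨1, by norm_num⟩ : Fin 4) = 1 := rfl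
  have h2 : (⟨2, by norm_num⟩ : Fin 4) = 2 := rfl
  have h3 : (⟨3, by norm_num⟩ : Fin 4) = 3 := rfl
  constructor
  · intro x y
    simp only [ric, Rcur, nab, obr, og, RcOp, oP, hst, Fin.sum_univ_four]
    norm_num
    simp
    ring
  · intro x y z
    have ht : otau = 0 := by
      simp only [otau, ric, Rcur, nab, obr, og, hst, Fin.sum_univ_four]
      norm_num
      simp
    funext i
    fin_cases i <;>
      · simp only [ht, Rcur, nab, obr, owedge, og, RcOp, oP, hst, Pi.smul_apply, Pi.sub_apply,
          Pi.add_apply, Pi.zero_apply, smul_eq_mul, h0, h1, h2, h3]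
        norm_num
        simp only [Fin.reduceEq, reduceIte, h0, h1, h2, h3, Matrix.cons_val]
        ring
end
end

section
/- If X = aP + bX₁ + cY₁ + dQ spans a null parallel line field of the oscillator Lie algebra, i.e. g(X,X)=0 and for each basis vector e there exists a scalar ω with ∇_e X = ω X, then b = c = d = 0; hence the only invariant parallel degenerate line field is spanned by P. -/
noncomputable section

theorem oscillator_parallel_null_line_field (a b c d : ℝ)
    (X : Fin 4 → ℝ) (hX : X = a • oP + b • oX + c • oY + d • oQ)
    (hne : X ≠ 0) (hnull : og X X = 0)
    (hpar : ∀ i : Fin 4, ∃ ω : ℝ, nab (stdv i) X = ω • X) :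
    b = 0 ∧ c = 0 ∧ d = 0 := by
  subst hX
  obtain ⟨ω, h⟩ := hpar 1
  have h2 := congrFun h 2
  have h3 := congrFun h 3
  simp [nab, obr, og, stdv, oP, oX, oY, oQ, Pi.add_apply, Pi.smul_apply] at h2 h3 hnull
  have hd : d = 0 := by
    rcases h3 with h3 | h3
    · subst h3; linarith
    · exact h3
  subst hd
  constructor
  · nlinarith [sq_nonneg b, sq_nonneg c]
  constructor
  · nlinarith [sq_nonneg b, sq_nonneg c]
  · rfl
end
end

section
/- For a left-invariant vector field V = a e₁ + b e₂ + c e₃ + d e₄ on the oscillator group, the rough Laplacian satisfies ∇*∇V := Σᵢ εᵢ (∇_{eᵢ}∇_{eᵢ}V − ∇_{∇_{eᵢ}eᵢ}V) = −(1/2)(b+d) u, where u = e₂ − e₄ and ε₁=ε₂=ε₃=1, ε₄=−1. In particular ∇*∇V = 0 if and only if b = −d. -/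
noncomputable section

def oe1 : Fin 4 → ℝ := -oP + oX
def oe2 : Fin 4 → ℝ := oX + oQ
def oe3 : Fin 4 → ℝ := oY
def oe4 : Fin 4 → ℝ := -oP + oX + oQ

theorem oscillator_rough_laplacian (a b c d : ℝ)
    (V : Fin 4 → ℝ) (hV : V = a • oe1 + b • oe2 + c • oe3 + d • oe4) :
    (nab oe1 (nab oe1 V) - nab (nab oe1 oe1) V)
      + (nab oe2 (nab oe2 V) - nab (nab oe2 oe2) V)
      + (nab oe3 (nab oe3 V) - nab (nab oe3 oe3) V)
      - (nab oe4 (nab oe4 V) - nab (nab oe4 oe4) V)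
      = (-(1/2 : ℝ) * (b + d)) • (oe2 - oe4) ∧
    ((nab oe1 (nab oe1 V) - nab (nab oe1 oe1) V)
      + (nab oe2 (nab oe2 V) - nab (nab oe2 oe2) V)
      + (nab oe3 (nab oe3 V) - nab (nab oe3 oe3) V)
      - (nab oe4 (nab oe4 V) - nab (nab oe4 oe4) V) = 0 ↔ b = -d) := by

  have key : (nab oe1 (nab oe1 V) - nab (nab oe1 oe1) V)
      + (nab oe2 (nab oe2 V) - nab (nab oe2 oe2) V)
      + (nab oe3 (nab oe3 V) - nab (nab oe3 oe3) V)
      - (nab oe4 (nab oe4 V) - nab (nab oe4 oe4) V)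
      = (-(1/2 : ℝ) * (b + d)) • (oe2 - oe4) := by
    subst hV
    funext j
    fin_cases j <;>
      simp [nab, obr, oe1, oe2, oe3, oe4, oP, oX, oY, oQ, stdv,
        Matrix.cons_val_zero, Matrix.cons_val_one] <;> ring
  refine ⟨key, ?_⟩
  rw [key]
  constructor
  · intro h
    have h2 := congrFun h 0
    simp [oe2, oe4, oP, oX, oY, oQ, stdv] at h2
    linarith
  · intro h
    rw [h]
    simp
end
end

section
/- Every left-invariant vector field V on the oscillator group with bi-invariant metric is geodesic: ∇_V V = (1/2)[V,V] = 0; and V is parallel (∇_x V = 0 for all x) if and only if, writing V = a e₁ + b e₂ + c e₃ + d e₄, one has a = c = 0 and b = −d, i.e., V is collinear to u = e₂ − e₄. -/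
noncomputable section

theorem oscillator_geodesic_parallel (a b c d : ℝ)
    (V : Fin 4 → ℝ) (hV : V = a • oe1 + b • oe2 + c • oe3 + d • oe4) :
    (∀ W : Fin 4 → ℝ, nab W W = 0) ∧
    ((∀ x : Fin 4 → ℝ, nab x V = 0) ↔ (a = 0 ∧ c = 0 ∧ b = -d)) := by
  constructor
  · intro W
    funext i
    fin_cases i <;> simp [nab, obr] <;> ring
  · constructor
    · intro h
      have h1 := congrFun (h oQ) 1
      have h2 := congrFun (h oQ) 2
      have h3 := congrFun (h oX) 2
      simp [hV, nab, obr, oQ, oX, oP, oY, oe1, oe2, oe3, oe4, stdv] at h1 h2 h3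
      refine ⟨?_, ?_, ?_⟩ <;> linarith
    · rintro ⟨ha, hc, hb⟩
      subst ha hc hb
      intro x
      funext i
      fin_cases i <;>
        simp [hV, nab, obr, oQ, oX, oP, oY, oe1, oe2, oe3, oe4, stdv] <;> ring
end
end

section
/- For a left-invariant vector field V = a e₁ + b e₂ + c e₃ + d e₄ on the oscillator group, the energy density ‖∇V‖² := Σᵢ εᵢ g(∇_{eᵢ}V, ∇_{eᵢ}V) equals (1/2)(b+d)², with ε₁=ε₂=ε₃=1, ε₄=−1; hence ‖∇V‖² = 0 if and only if b = −d, and among left-invariant vector fields this minimizes the energy density. -/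
noncomputable section

theorem oscillator_energy_density (a b c d : ℝ)
    (V : Fin 4 → ℝ) (hV : V = a • oe1 + b • oe2 + c • oe3 + d • oe4) :
    og (nab oe1 V) (nab oe1 V) + og (nab oe2 V) (nab oe2 V)
      + og (nab oe3 V) (nab oe3 V) - og (nab oe4 V) (nab oe4 V)
      = (1/2 : ℝ) * (b + d)^2 ∧
    ((1/2 : ℝ) * (b + d)^2 = 0 ↔ b = -d) ∧
    (0 : ℝ) ≤ (1/2 : ℝ) * (b + d)^2 := by
  have h1 : oe1 = ![-1,1,0,0] := by
    funext i; fin_cases i <;> norm_num [oe1, oP, oX, stdv, Fin.ext_iff, show ((3:Fin 4):ℕ)=3 from rfl, show ((2:Fin 4):ℕ)=2 from rfl, show ((1:Fin 4):ℕ)=1 from rfl, show ((0:Fin 4):ℕ)=0 from rfl]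
  have h2 : oe2 = ![0,1,0,1] := by
    funext i; fin_cases i <;> norm_num [oe2, oX, oQ, stdv, Fin.ext_iff, show ((3:Fin 4):ℕ)=3 from rfl, show ((2:Fin 4):ℕ)=2 from rfl, show ((1:Fin 4):ℕ)=1 from rfl, show ((0:Fin 4):ℕ)=0 from rfl]
  have h3 : oe3 = ![0,0,1,0] := by
    funext i; fin_cases i <;> norm_num [oe3, oY, stdv, Fin.ext_iff, show ((3:Fin 4):ℕ)=3 from rfl, show ((2:Fin 4):ℕ)=2 from rfl, show ((1:Fin 4):ℕ)=1 from rfl, show ((0:Fin 4):ℕ)=0 from rfl]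
  have h4 : oe4 = ![-1,1,0,1] := by
    funext i; fin_cases i <;> norm_num [oe4, oP, oX, oQ, stdv, Fin.ext_iff, show ((3:Fin 4):ℕ)=3 from rfl, show ((2:Fin 4):ℕ)=2 from rfl, show ((1:Fin 4):ℕ)=1 from rfl, show ((0:Fin 4):ℕ)=0 from rfl]
  have hVv : V = ![-a-d, a+b+d, c, b+d] := by
    subst hV
    funext i; fin_cases i <;>
      norm_num [oe1, oe2, oe3, oe4, oP, oX, oY, oQ, stdv, Fin.ext_iff, show ((3:Fin 4):ℕ)=3 from rfl, show ((2:Fin 4):ℕ)=2 from rfl, show ((1:Fin 4):ℕ)=1 from rfl, show ((0:Fin 4):ℕ)=0 from rfl] <;> ring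
  refine ⟨?_, ?_, by positivity⟩
  · rw [h1, h2, h3, h4, hVv]
    simp only [og, nab, obr, Pi.smul_apply, smul_eq_mul, Matrix.cons_val_zero, Matrix.cons_val_one, Matrix.cons_val_two, Matrix.cons_val_three, Matrix.head_cons, Matrix.tail_cons]
    norm_num
    ring
  · constructor
    · intro h; nlinarith [sq_nonneg (b+d)]
    · intro h; rw [h]; ring
end
end
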